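/- Let N ≥ 1 and let Π ⊆ ℤ_{≥0}^N be a finite, nonempty, monotone set. Let E denote the set of extreme points of conv(Π). If d⁰ ∈ E is a maximal element of E with respect to the componentwise order, then d⁰ is a maximal element of conv(Π). -/

import Mathlib

/-- If `d⁰` is an extreme point of `conv(Π)` (for a finite, nonempty,
monotone schedule set `Π ⊆ ℤ_{≥0}^N`) that is maximal among the extreme points
with respect to the componentwise order, then `d⁰` is maximal in `conv(Π)`. -/
theorem extreme_maximal_is_maximal_in_hull
    (N : ℕ) (hN : 1 ≤ N) (Sched : Set (Fin N → ℝ))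
    (hfin : Sched.Finite) (hne : Sched.Nonempty)
    (hint : ∀ d ∈ Sched, ∀ i, ∃ m : ℕ, d i = (m : ℝ))
    (hmono : ∀ d ∈ Sched, ∀ d' : Fin N → ℝ,
      (∀ i, ∃ m : ℕ, d' i = (m : ℝ)) → d' ≤ d → d' ∈ Sched)
    (d0 : Fin N → ℝ)
    (hd0E : d0 ∈ Set.extremePoints ℝ (convexHull ℝ Sched))
    (hd0max : ∀ y ∈ Set.extremePoints ℝ (convexHull ℝ Sched), d0 ≤ y → d0 = y) :
    ∀ y ∈ convexHull ℝ Sched, d0 ≤ y → d0 = y := by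
  classical
  set K := convexHull ℝ Sched with hKdef
  have hKconv : Convex ℝ K := convex_convexHull ℝ Sched
  have hd0K : d0 ∈ K := hd0E.1
  -- every point of K is componentwise nonnegative
  have hKnn : ∀ x ∈ K, ∀ k, 0 ≤ x k := by
    have hsub : K ⊆ {x : Fin N → ℝ | ∀ k, 0 ≤ x k} := by
      apply convexHull_min
      · intro v hv k
        obtain ⟨m, hm⟩ := hint v hv k
        rw [hm]; positivity
      · intro u hu v hv a b ha hb hab k
        have h1 := hu k
        have h2 := hv k
        have : (a • u + b • v) k = a * u k + b * v k := by
          simp [smul_eq_mul]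
        rw [this]; nlinarith
    intro x hx k; exact hsub hx k
  -- zeroing out a coordinate stays in K
  have hzero : ∀ i : Fin N, ∀ x ∈ K, Function.update x i 0 ∈ K := by
    intro i x hx
    have hsub : K ⊆ {x : Fin N → ℝ | Function.update x i 0 ∈ K} := by
      apply convexHull_min
      · intro v hv
        have hvS : Function.update v i 0 ∈ Sched := by
          apply hmono v hv
          · intro k
            by_cases hk : k = i
            · subst hk; exact ⟨0, by simp⟩
            · obtain ⟨m, hm⟩ := hint v hv k
              exact ⟨m, by rw [Function.update_of_ne hk, hm]⟩
          · intro k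
            by_cases hk : k = i
            · subst hk
              simp only [Function.update_self]
              exact hKnn v (subset_convexHull ℝ Sched hv) k
            · rw [Function.update_of_ne hk]
        exact subset_convexHull ℝ Sched hvS
      · intro u hu v hv a b ha hb hab
        simp only [Set.mem_setOf_eq] at hu hv ⊢
        have heq : Function.update (a • u + b • v) i 0 =
            a • Function.update u i 0 + b • Function.update v i 0 := by
          funext k
          by_cases hk : k = i
          · subst hk; simp
          · simp [Function.update_of_ne hk, smul_eq_mul]
        rw [heq]
        exact hKconv hu hv ha hb hab
    exact hsub hx
  -- lowering a single coordinate stays in K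
  have hlow : ∀ i : Fin N, ∀ x ∈ K, ∀ c : ℝ, 0 ≤ c → c ≤ x i →
      Function.update x i c ∈ K := by
    intro i x hx c hc0 hcx
    have hx0 : Function.update x i 0 ∈ K := hzero i x hx
    by_cases hxi : x i = 0
    · have : c = 0 := le_antisymm (hxi ▸ hcx) hc0
      rw [this]; exact hx0
    · have hxipos : 0 < x i := lt_of_le_of_ne (le_trans hc0 hcx) (Ne.symm hxi)
      set t : ℝ := c / x i with htdef
      have ht0 : 0 ≤ t := div_nonneg hc0 hxipos.le
      have ht1 : t ≤ 1 := (div_le_one hxipos).2 hcx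
      have heq : Function.update x i c = (1 - t) • Function.update x i 0 + t • x := by
        funext k
        by_cases hk : k = i
        · subst hk
          simp only [Function.update_self, Pi.add_apply, Pi.smul_apply, smul_eq_mul]
          rw [htdef]
          field_simp
          ring
        · simp only [Function.update_of_ne hk, Pi.add_apply, Pi.smul_apply, smul_eq_mul]
          ring
      rw [heq]
      exact hKconv hx0 hx (by linarith) ht0 (by ring)
  -- full down-closedness of K (within the nonnegative orthant)
  have hdc : ∀ s : Finset (Fin N), ∀ x ∈ K, ∀ x' : Fin N → ℝ,
      (∀ k, 0 ≤ x' k) → (∀ k, x' k ≤ x k) → (∀ k, k ∉ s → x' k = x k) → x' ∈ K := by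
    intro s
    induction s using Finset.induction with
    | empty =>
      intro x hx x' _ _ hout
      have : x' = x := funext fun k => hout k (by simp)
      rwa [this]
    | @insert i s hi ih =>
      intro x hx x' h0 hle hout
      have hx1 : Function.update x i (x' i) ∈ K := hlow i x hx (x' i) (h0 i) (hle i)
      apply ih _ hx1 x' h0
      · intro k
        by_cases hk : k = i
        · subst hk; simp
        · rw [Function.update_of_ne hk]; exact hle k
      · intro k hk
        by_cases hki : k = i
        · subst hki; simp
        · rw [Function.update_of_ne hki]
          exact hout k (by simp [hki, hk])
  have hdcK : ∀ x ∈ K, ∀ x' : Fin N → ℝ,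
      (∀ k, 0 ≤ x' k) → (∀ k, x' k ≤ x k) → x' ∈ K := by
    intro x hx x' h0 hle
    exact hdc Finset.univ x hx x' h0 hle (fun k hk => absurd (Finset.mem_univ k) hk)
  -- main induction on the number of strict coordinates
  have main : ∀ n : ℕ, ∀ y ∈ K, d0 ≤ y →
      (Finset.univ.filter fun k => d0 k < y k).card ≤ n → d0 = y := by
    intro n
    induction n with
    | zero =>
      intro y hy hle hcard
      have hempty : (Finset.univ.filter fun k => d0 k < y k) = ∅ :=
        Finset.card_eq_zero.mp (Nat.le_zero.mp hcard)
      funext k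
      by_contra hk
      have : d0 k < y k := lt_of_le_of_ne (hle k) hk
      have : k ∈ Finset.univ.filter fun k => d0 k < y k := by
        simp [this]
      rw [hempty] at this
      exact absurd this (Finset.notMem_empty k)
    | succ n ih =>
      intro y hy hle hcard
      by_cases hc : (Finset.univ.filter fun k => d0 k < y k).card ≤ n
      · exact ih y hy hle hc
      · have hpos : 0 < (Finset.univ.filter fun k => d0 k < y k).card := by omega
        obtain ⟨i, hi⟩ := Finset.card_pos.mp hpos
        have histrict : d0 i < y i := (Finset.mem_filter.mp hi).2
        -- first: d0 i = 0
        have hd0i : d0 i = 0 := by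
          by_contra hne0
          have hd0ipos : 0 < d0 i := lt_of_le_of_ne (hKnn d0 hd0K i) (Ne.symm hne0)
          set t : ℝ := min (d0 i) (y i - d0 i) with htdef
          have htpos : 0 < t := lt_min hd0ipos (by linarith)
          have ht1 : t ≤ d0 i := min_le_left _ _
          have ht2 : t ≤ y i - d0 i := min_le_right _ _
          have haK : Function.update d0 i (d0 i - t) ∈ K :=
            hlow i d0 hd0K _ (by linarith) (by linarith)
          have hbK : Function.update d0 i (d0 i + t) ∈ K := by
            apply hdcK y hy
            · intro k
              by_cases hk : k = i
              · subst hk; simp only [Function.update_self]; linarith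
              · rw [Function.update_of_ne hk]; exact hKnn d0 hd0K k
            · intro k
              by_cases hk : k = i
              · subst hk; simp only [Function.update_self]; linarith
              · rw [Function.update_of_ne hk]; exact hle k
          have hseg : d0 ∈ openSegment ℝ (Function.update d0 i (d0 i - t))
              (Function.update d0 i (d0 i + t)) := by
            refine ⟨1/2, 1/2, by norm_num, by norm_num, by norm_num, ?_⟩
            funext k
            by_cases hk : k = i
            · subst hk
              simp only [Pi.add_apply, Pi.smul_apply, Function.update_self, smul_eq_mul]
              ring
            · simp only [Pi.add_apply, Pi.smul_apply, Function.update_of_ne hk, smul_eq_mul]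
              ring
          have hEq := hd0E.2 haK hbK hseg
          have : d0 i - t = d0 i := by
            have := congrFun hEq i
            simpa using this
          linarith
        -- apply the inductive hypothesis to y with coordinate i zeroed
        have hy' : Function.update y i 0 ∈ K := hzero i y hy
        have hle' : d0 ≤ Function.update y i 0 := by
          intro k
          by_cases hk : k = i
          · subst hk; simp [hd0i]
          · rw [Function.update_of_ne hk]; exact hle k
        have hfilter' : (Finset.univ.filter fun k => d0 k < Function.update y i 0 k) =
            (Finset.univ.filter fun k => d0 k < y k).erase i := by
          ext k
          simp only [Finset.mem_filter, Finset.mem_univ, true_and, Finset.mem_erase]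
          by_cases hk : k = i
          · subst hk
            simp [hd0i]
          · simp [Function.update_of_ne hk, hk]
        have hcard' : (Finset.univ.filter fun k => d0 k < Function.update y i 0 k).card ≤ n := by
          rw [hfilter', Finset.card_erase_of_mem hi]
          omega
        have hdy' : d0 = Function.update y i 0 := ih _ hy' hle' hcard'
        have hkeq : ∀ k, k ≠ i → y k = d0 k := by
          intro k hk
          rw [hdy', Function.update_of_ne hk]
        -- now y = d0 except at i, with y i > d0 i = 0.  Derive a contradiction.
        exfalso
        set A' : Set (Fin N → ℝ) := {x | x ∈ K ∧ ∀ k, k ≠ i → x k = d0 k} with hA'def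
        have hyA' : y ∈ A' := ⟨hy, hkeq⟩
        have hA'cpt : IsCompact A' := by
          have hKcpt : IsCompact K := hfin.isCompact_convexHull (𝕜 := ℝ)
          have hCcl : IsClosed {x : Fin N → ℝ | ∀ k, k ≠ i → x k = d0 k} := by
            have heqset : {x : Fin N → ℝ | ∀ k, k ≠ i → x k = d0 k} =
                ⋂ k, {x : Fin N → ℝ | k ≠ i → x k = d0 k} := by
              ext x; simp [Set.mem_iInter]
            rw [heqset]
            apply isClosed_iInter
            intro k
            by_cases hk : k = i
            · subst hk
              have : {x : Fin N → ℝ | k ≠ k → x k = d0 k} = Set.univ := by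
                ext x; simp
              rw [this]; exact isClosed_univ
            · have : {x : Fin N → ℝ | k ≠ i → x k = d0 k} = {x : Fin N → ℝ | x k = d0 k} := by
                ext x; simp [hk]
              rw [this]
              exact isClosed_eq (continuous_apply k) continuous_const
          have : A' = K ∩ {x : Fin N → ℝ | ∀ k, k ≠ i → x k = d0 k} := rfl
          rw [this]
          exact hKcpt.inter_right hCcl
        obtain ⟨z, hzA', hzmax⟩ :=
          hA'cpt.exists_isMaxOn ⟨y, hyA'⟩ ((continuous_apply i).continuousOn)
        have hzmax' : ∀ x ∈ A', x i ≤ z i := fun x hx => hzmax hx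
        -- z is an extreme point of K
        have hzE : z ∈ Set.extremePoints ℝ K := by
          refine mem_extremePoints.2 ⟨hzA'.1, ?_⟩
          intro x1 hx1 x2 hx2 hseg
          obtain ⟨a, b, ha, hb, hab, hcomb⟩ := hseg
          have hpx1K : Function.update x1 i 0 ∈ K := hzero i x1 hx1
          have hpx2K : Function.update x2 i 0 ∈ K := hzero i x2 hx2
          have hd0seg : d0 ∈ openSegment ℝ (Function.update x1 i 0) (Function.update x2 i 0) := by
            refine ⟨a, b, ha, hb, hab, ?_⟩
            funext k
            by_cases hk : k = i
            · subst hk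
              simp only [Pi.add_apply, Pi.smul_apply, Function.update_self, smul_eq_mul]
              rw [hd0i]; ring
            · have hck := congrFun hcomb k
              simp only [Pi.add_apply, Pi.smul_apply, smul_eq_mul] at hck
              simp only [Pi.add_apply, Pi.smul_apply, Function.update_of_ne hk, smul_eq_mul]
              rw [hck, hzA'.2 k hk]
          obtain ⟨h1, h2⟩ := (mem_extremePoints.1 hd0E).2 _ hpx1K _ hpx2K hd0seg
          have hx1A' : x1 ∈ A' := by
            refine ⟨hx1, fun k hk => ?_⟩
            have := congrFun h1 k
            rwa [Function.update_of_ne hk] at this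
          have hx2A' : x2 ∈ A' := by
            refine ⟨hx2, fun k hk => ?_⟩
            have := congrFun h2 k
            rwa [Function.update_of_ne hk] at this
          have h1i : x1 i ≤ z i := hzmax' x1 hx1A'
          have h2i : x2 i ≤ z i := hzmax' x2 hx2A'
          have hzi : a * x1 i + b * x2 i = z i := by
            have := congrFun hcomb i
            simpa [smul_eq_mul] using this
          have key : ∀ a' b' u v : ℝ, 0 < a' → 0 < b' → a' + b' = 1 → u ≤ z i → v ≤ z i →
              a' * u + b' * v = z i → u = z i := by
            intro a' b' u v ha' hb' hab' hu hv hsum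
            by_contra h
            have hlt : u < z i := lt_of_le_of_ne hu h
            have h1' : a' * u < a' * z i := mul_lt_mul_of_pos_left hlt ha'
            have h2' : b' * v ≤ b' * z i := mul_le_mul_of_nonneg_left hv hb'.le
            have h3' : a' * z i + b' * z i = z i := by rw [← add_mul, hab', one_mul]
            linarith
          have e1 : x1 i = z i := key a b _ _ ha hb hab h1i h2i hzi
          have e2 : x2 i = z i := key b a _ _ hb ha (by linarith) h2i h1i (by linarith)
          constructor
          · funext k
            by_cases hk : k = i
            · subst hk; exact e1
            · rw [hx1A'.2 k hk, hzA'.2 k hk]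
          · funext k
            by_cases hk : k = i
            · subst hk; exact e2
            · rw [hx2A'.2 k hk, hzA'.2 k hk]
        -- contradiction with maximality of d0 among extreme points
        have hd0z : d0 ≤ z := by
          intro k
          by_cases hk : k = i
          · subst hk; rw [hd0i]; exact hKnn z hzA'.1 k
          · rw [hzA'.2 k hk]
        have heq := hd0max z hzE hd0z
        have hyz : y i ≤ z i := hzmax' y hyA'
        have : d0 i = z i := congrFun heq i
        linarith
  intro y hy hle
  exact main _ y hy hle le_rfl
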